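/- Let 𝒩 be a nonempty set, k a field of characteristic 0, K = k((ε)), and T a symmetral K-valued mould. Let (U_-, U_+) be the Birkhoff decomposition of T, i.e. the unique pair of K-valued moulds with U_-^∅ = U_+^∅ = 1, U_-^{n̲} ∈ K_- for all nonempty n̲, U_+^{n̲} ∈ K_+ for all n̲, and U_- × T = U_+. Then both U_- and U_+ are symmetral. -/

import Mathlib

open scoped Classical

/-- Shuffle coefficient: the number of ways the word `n` can be obtained by interleaving
the letters of `a` and `b` while preserving their internal orders. -/
noncomputable def sh {𝒩 : Type*} : List 𝒩 → List 𝒩 → List 𝒩 → ℕ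
  | [], b, n => if b = n then 1 else 0
  | a, [], n => if a = n then 1 else 0
  | _ :: _, _ :: _, [] => 0
  | x :: a, y :: b, z :: n =>
      (if x = z then sh a (y :: b) n else 0) + (if y = z then sh (x :: a) b n else 0)

/-- Mould multiplication: `(M × N)^n = ∑_{n = a b} M^a N^b`. -/
noncomputable def mmul {𝒩 A : Type*} [Semiring A] (M N : List 𝒩 → A) : List 𝒩 → A :=
  fun n => ∑ i ∈ Finset.range (n.length + 1), M (n.take i) * N (n.drop i)

/-- A mould `M` is symmetral if `M^∅ = 1` and
`∑_n sh^{a,b}_n M^n = M^a M^b` for all nonempty words `a`, `b`. -/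
def Symmetral {𝒩 A : Type*} [CommSemiring A] (M : List 𝒩 → A) : Prop :=
  M [] = 1 ∧ ∀ a b : List 𝒩, a ≠ [] → b ≠ [] →
    (∑ᶠ n : List 𝒩, (sh a b n : A) * M n) = M a * M b

/-- Membership in `K_- = ε⁻¹ k[ε⁻¹]`: all coefficients of nonnegative powers vanish
(for Laurent series, this forces a polynomial in `ε⁻¹` with zero constant term). -/
def Kminus {k : Type*} [Field k] (f : LaurentSeries k) : Prop :=
  ∀ n : ℤ, 0 ≤ n → f.coeff n = 0

/-- Membership in `K_+ = k[[ε]]`: all coefficients of negative powers vanish. -/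
def Kplus {k : Type*} [Field k] (f : LaurentSeries k) : Prop :=
  ∀ n : ℤ, n < 0 → f.coeff n = 0

def shl {𝒩 : Type*} : List 𝒩 → List 𝒩 → List (List 𝒩)
  | [], b => [b]
  | a, [] => [a]
  | x :: a, y :: b => ((shl a (y :: b)).map (List.cons x)) ++ ((shl (x :: a) b).map (List.cons y))

lemma shl_length {𝒩 : Type*} : ∀ (a b n : List 𝒩), n ∈ shl a b → n.length = a.length + b.length
  | [], b, n, h => by simp [shl] at h; simp [h]
  | x :: a, [], n, h => by simp [shl] at h; simp [h]
  | x :: a, y :: b, n, h => by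
      simp only [shl, List.mem_append, List.mem_map] at h
      rcases h with ⟨m, hm, rfl⟩ | ⟨m, hm, rfl⟩
      · have := shl_length a (y::b) m hm; simp [this]; omega
      · have := shl_length (x::a) b m hm; simp [this]; omega


lemma count_map_cons {𝒩 : Type*} (x : 𝒩) (n : List 𝒩) (S : List (List 𝒩)) :
    List.count (x :: n) (List.map (List.cons x) S) = List.count n S := by
  induction S with
  | nil => simp
  | cons m S ih => simp [List.count_cons, ih]

lemma sh_eq_count {𝒩 : Type*} : ∀ (a b n : List 𝒩), sh a b n = (shl a b).count n
  | [], b, n => by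
      rcases eq_or_ne b n with rfl | h
      · simp [sh, shl]
      · simp [sh, shl, h, List.count_singleton, Ne.symm h]
  | x :: a, [], n => by
      rcases eq_or_ne (x :: a) n with rfl | h
      · simp [sh, shl]
      · simp [sh, shl, h, List.count_singleton, Ne.symm h]
  | x :: a, y :: b, [] => by
      simp only [sh, shl, List.count_append]
      rw [List.count_eq_zero_of_not_mem (by simp), List.count_eq_zero_of_not_mem (by simp)]
  | x :: a, y :: b, z :: n => by
      simp only [sh, shl, List.count_append]
      congr 1
      · by_cases h : x = z
        · subst h
          rw [if_pos rfl, sh_eq_count a (y::b) n, count_map_cons]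
        · rw [if_neg h, eq_comm, List.count_eq_zero]
          intro hmem
          obtain ⟨m, _, hm⟩ := List.mem_map.1 hmem
          injection hm with h1 _
          exact h h1
      · by_cases h : y = z
        · subst h
          rw [if_pos rfl, sh_eq_count (x::a) b n, count_map_cons]
        · rw [if_neg h, eq_comm, List.count_eq_zero]
          intro hmem
          obtain ⟨m, _, hm⟩ := List.mem_map.1 hmem
          injection hm with h1 _
          exact h h1
section PhiSec
variable {𝒩 A : Type*} [CommRing A]

noncomputable def Phi (M : List 𝒩 → A) (a b : List 𝒩) : A := ((shl a b).map M).sum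

lemma phi_nil_left (M : List 𝒩 → A) (b : List 𝒩) : Phi M [] b = M b := by simp [Phi, shl]

lemma phi_nil_right (M : List 𝒩 → A) (a : List 𝒩) : Phi M a [] = M a := by
  cases a <;> simp [Phi, shl]

lemma phi_cons (M : List 𝒩 → A) (x y : 𝒩) (a b : List 𝒩) :
    Phi M (x::a) (y::b)
      = Phi (fun l => M (x::l)) a (y::b) + Phi (fun l => M (y::l)) (x::a) b := by
  simp [Phi, shl, Function.comp_def]

lemma phi_add (M N : List 𝒩 → A) (a b : List 𝒩) :
    Phi (fun l => M l + N l) a b = Phi M a b + Phi N a b := by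
  simp [Phi, List.sum_map_add]

lemma phi_mul_left (c : A) (M : List 𝒩 → A) (a b : List 𝒩) :
    Phi (fun l => c * M l) a b = c * Phi M a b := by
  simp only [Phi]
  induction shl a b with
  | nil => simp
  | cons m S ih => simp [ih, mul_add]

lemma finsum_sh (M : List 𝒩 → A) (a b : List 𝒩) :
    (∑ᶠ n : List 𝒩, (sh a b n : A) * M n) = Phi M a b := by
  have hsub : Function.support (fun n => (sh a b n : A) * M n) ⊆ ↑(shl a b).toFinset := by
    intro n hn
    simp only [Function.mem_support] at hn
    by_contra hmem
    have h0 : (shl a b).count n = 0 :=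
      List.count_eq_zero_of_not_mem (by simpa using hmem)
    rw [sh_eq_count, h0] at hn
    simp at hn
  rw [finsum_eq_sum_of_support_subset _ hsub, Phi, Finset.sum_list_map_count]
  refine Finset.sum_congr rfl fun n _ => ?_
  rw [sh_eq_count, nsmul_eq_mul]
  congr 1
  unfold List.count List.countP
  congr 2
  funext u
  by_cases h : u = n <;> simp [h]

end PhiSec

theorem key {𝒩 A : Type*} [CommRing A] : ∀ (M N : List 𝒩 → A) (a b : List 𝒩),
    Phi (mmul M N) a b
      = ∑ i ∈ Finset.range (a.length + 1), ∑ j ∈ Finset.range (b.length + 1),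
          Phi M (a.take i) (b.take j) * Phi N (a.drop i) (b.drop j)
  | M, N, [], b => by
      simp [phi_nil_left, mmul, Finset.sum_range_one]
  | M, N, x :: a, [] => by
      simp [phi_nil_right, mmul, Finset.sum_range_one]
  | M, N, x :: a, y :: b => by
      have hx := key (fun t => M (x :: t)) N a (y :: b)
      have hy := key (fun t => M (y :: t)) N (x :: a) b
      have hsplit : ∀ (z : 𝒩) (l : List 𝒩), mmul M N (z :: l)
          = M [] * N (z :: l) + mmul (fun t => M (z :: t)) N l := by
        intro z l
        simp only [mmul, List.length_cons]
        rw [Finset.sum_range_succ']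
        simp only [List.take_succ_cons, List.drop_succ_cons, List.take_zero, List.drop_zero]
        rw [add_comm]
      have e1 : Phi (fun l => mmul M N (x :: l)) a (y :: b)
          = M [] * Phi (fun l => N (x :: l)) a (y :: b)
            + Phi (mmul (fun t => M (x :: t)) N) a (y :: b) := by
        rw [show (fun l => mmul M N (x :: l))
              = fun l => M [] * N (x :: l) + mmul (fun t => M (x :: t)) N l
            from funext fun l => hsplit x l]
        rw [phi_add (fun l => M [] * N (x :: l)) (mmul (fun t => M (x :: t)) N),
          phi_mul_left (M []) (fun l => N (x :: l))]
      have e2 : Phi (fun l => mmul M N (y :: l)) (x :: a) b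
          = M [] * Phi (fun l => N (y :: l)) (x :: a) b
            + Phi (mmul (fun t => M (y :: t)) N) (x :: a) b := by
        rw [show (fun l => mmul M N (y :: l))
              = fun l => M [] * N (y :: l) + mmul (fun t => M (y :: t)) N l
            from funext fun l => hsplit y l]
        rw [phi_add (fun l => M [] * N (y :: l)) (mmul (fun t => M (y :: t)) N),
          phi_mul_left (M []) (fun l => N (y :: l))]
      -- the five building blocks
      set S1 : A := ∑ i ∈ Finset.range (a.length + 1), ∑ j ∈ Finset.range (b.length + 1),
          Phi (fun l => M (x :: l)) (a.take i) (y :: b.take j) * Phi N (a.drop i) (b.drop j) with hS1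
      set S2 : A := ∑ i ∈ Finset.range (a.length + 1), ∑ j ∈ Finset.range (b.length + 1),
          Phi (fun l => M (y :: l)) (x :: a.take i) (b.take j) * Phi N (a.drop i) (b.drop j) with hS2
      set S3 : A := ∑ i ∈ Finset.range (a.length + 1),
          M (x :: a.take i) * Phi N (a.drop i) (y :: b) with hS3
      set S4 : A := ∑ j ∈ Finset.range (b.length + 1),
          M (y :: b.take j) * Phi N (x :: a) (b.drop j) with hS4
      -- hx gives S1 + S3
      have hx' : Phi (mmul (fun t => M (x :: t)) N) a (y :: b) = S1 + S3 := by
        rw [hx]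
        simp only [List.length_cons]
        rw [show (∑ i ∈ Finset.range (a.length + 1), ∑ j ∈ Finset.range (b.length + 1 + 1),
              Phi (fun t => M (x :: t)) (a.take i) ((y :: b).take j)
                * Phi N (a.drop i) ((y :: b).drop j))
            = ∑ i ∈ Finset.range (a.length + 1),
              ((∑ j ∈ Finset.range (b.length + 1),
                Phi (fun t => M (x :: t)) (a.take i) ((y :: b).take (j + 1))
                  * Phi N (a.drop i) ((y :: b).drop (j + 1)))
              + Phi (fun t => M (x :: t)) (a.take i) ((y :: b).take 0)
                  * Phi N (a.drop i) ((y :: b).drop 0))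
          from Finset.sum_congr rfl fun i _ => Finset.sum_range_succ' _ _]
        rw [Finset.sum_add_distrib, hS1, hS3]
        refine congrArg₂ (· + ·)
          (Finset.sum_congr rfl fun i _ => Finset.sum_congr rfl fun j _ => ?_)
          (Finset.sum_congr rfl fun i _ => ?_)
        · simp only [List.take_succ_cons, List.drop_succ_cons]
        · simp only [List.take_zero, List.drop_zero, phi_nil_right]
      -- hy gives S2 + S4
      have hy' : Phi (mmul (fun t => M (y :: t)) N) (x :: a) b = S2 + S4 := by
        rw [hy]
        simp only [List.length_cons]
        rw [Finset.sum_range_succ' (fun i => ∑ j ∈ Finset.range (b.length + 1),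
          Phi (fun t => M (y :: t)) ((x :: a).take i) (b.take j)
            * Phi N ((x :: a).drop i) (b.drop j)) (a.length + 1)]
        rw [hS2, hS4]
        refine congrArg₂ (· + ·)
          (Finset.sum_congr rfl fun i _ => Finset.sum_congr rfl fun j _ => ?_)
          (Finset.sum_congr rfl fun j _ => ?_)
        · simp only [List.take_succ_cons, List.drop_succ_cons]
        · simp only [List.take_zero, List.drop_zero, phi_nil_left]
      -- expand the RHS of the goal
      have hRHS : (∑ i ∈ Finset.range ((x :: a).length + 1),
            ∑ j ∈ Finset.range ((y :: b).length + 1),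
            Phi M ((x :: a).take i) ((y :: b).take j)
              * Phi N ((x :: a).drop i) ((y :: b).drop j))
          = (S1 + S2 + S3) + (S4 + M [] * Phi N (x :: a) (y :: b)) := by
        simp only [List.length_cons]
        rw [Finset.sum_range_succ' (fun i => ∑ j ∈ Finset.range (b.length + 1 + 1),
          Phi M ((x :: a).take i) ((y :: b).take j)
            * Phi N ((x :: a).drop i) ((y :: b).drop j)) (a.length + 1)]
        refine congrArg₂ (· + ·) ?_ ?_
        · -- i+1 part: split inner j, use phi_cons
          rw [show (∑ i ∈ Finset.range (a.length + 1), ∑ j ∈ Finset.range (b.length + 1 + 1),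
                Phi M ((x :: a).take (i + 1)) ((y :: b).take j)
                  * Phi N ((x :: a).drop (i + 1)) ((y :: b).drop j))
              = ∑ i ∈ Finset.range (a.length + 1),
                ((∑ j ∈ Finset.range (b.length + 1),
                  Phi M ((x :: a).take (i + 1)) ((y :: b).take (j + 1))
                    * Phi N ((x :: a).drop (i + 1)) ((y :: b).drop (j + 1)))
                + Phi M ((x :: a).take (i + 1)) ((y :: b).take 0)
                    * Phi N ((x :: a).drop (i + 1)) ((y :: b).drop 0))
            from Finset.sum_congr rfl fun i _ => Finset.sum_range_succ' _ _]
          rw [Finset.sum_add_distrib]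
          have h1 : (∑ i ∈ Finset.range (a.length + 1), ∑ j ∈ Finset.range (b.length + 1),
                Phi M ((x :: a).take (i + 1)) ((y :: b).take (j + 1))
                  * Phi N ((x :: a).drop (i + 1)) ((y :: b).drop (j + 1)))
              = S1 + S2 := by
            rw [hS1, hS2, ← Finset.sum_add_distrib]
            refine Finset.sum_congr rfl fun i _ => ?_
            rw [← Finset.sum_add_distrib]
            refine Finset.sum_congr rfl fun j _ => ?_
            simp only [List.take_succ_cons, List.drop_succ_cons]
            rw [phi_cons, add_mul]
          have h2 : (∑ i ∈ Finset.range (a.length + 1),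
                Phi M ((x :: a).take (i + 1)) ((y :: b).take 0)
                  * Phi N ((x :: a).drop (i + 1)) ((y :: b).drop 0))
              = S3 := by
            rw [hS3]
            refine Finset.sum_congr rfl fun i _ => ?_
            simp only [List.take_succ_cons, List.drop_succ_cons, List.take_zero,
              List.drop_zero, phi_nil_right]
          rw [h1, h2]
        · -- i = 0 part
          rw [Finset.sum_range_succ' (fun j =>
            Phi M ((x :: a).take 0) ((y :: b).take j)
              * Phi N ((x :: a).drop 0) ((y :: b).drop j)) (b.length + 1)]
          rw [hS4]
          refine congrArg₂ (· + ·) (Finset.sum_congr rfl fun j _ => ?_) ?_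
          · simp only [List.take_succ_cons, List.drop_succ_cons, List.take_zero,
              List.drop_zero, phi_nil_left]
          · simp only [List.take_zero, List.drop_zero, phi_nil_left, phi_nil_right]
      rw [phi_cons (mmul M N) x y a b, e1, e2, hx', hy', hRHS,
        phi_cons N x y a b]
      ring
termination_by M N a b => a.length + b.length
decreasing_by all_goals simp [List.length_cons]

lemma psi_mul {𝒩 A : Type*} [CommRing A] (M N : List 𝒩 → A) (a b : List 𝒩) :
    mmul M N a * mmul M N b
      = ∑ i ∈ Finset.range (a.length + 1), ∑ j ∈ Finset.range (b.length + 1),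
          (M (a.take i) * M (b.take j)) * (N (a.drop i) * N (b.drop j)) := by
  simp only [mmul]
  rw [Finset.sum_mul_sum]
  exact Finset.sum_congr rfl fun i _ => Finset.sum_congr rfl fun j _ => by ring

section Laurent
variable {k : Type*} [Field k]

lemma Kminus_mul {f g : LaurentSeries k} (hf : Kminus f) (hg : Kminus g) : Kminus (f * g) := by
  intro n hn
  rw [HahnSeries.coeff_mul]
  refine Finset.sum_eq_zero fun ij hij => ?_
  rw [Finset.mem_addAntidiagonal] at hij
  obtain ⟨h1, h2, h3⟩ := hij
  rw [HahnSeries.mem_support] at h1 h2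
  exfalso
  have l1 : ij.1 < 0 := by by_contra h; exact h1 (hf _ (le_of_not_gt h))
  have l2 : ij.2 < 0 := by by_contra h; exact h2 (hg _ (le_of_not_gt h))
  omega

lemma Kplus_mul {f g : LaurentSeries k} (hf : Kplus f) (hg : Kplus g) : Kplus (f * g) := by
  intro n hn
  rw [HahnSeries.coeff_mul]
  refine Finset.sum_eq_zero fun ij hij => ?_
  rw [Finset.mem_addAntidiagonal] at hij
  obtain ⟨h1, h2, h3⟩ := hij
  rw [HahnSeries.mem_support] at h1 h2
  exfalso
  have l1 : (0:ℤ) ≤ ij.1 := by by_contra h; exact h1 (hf _ (lt_of_not_ge h))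
  have l2 : (0:ℤ) ≤ ij.2 := by by_contra h; exact h2 (hg _ (lt_of_not_ge h))
  omega

lemma Kminus_sub {f g : LaurentSeries k} (hf : Kminus f) (hg : Kminus g) : Kminus (f - g) := by
  intro n hn; rw [HahnSeries.coeff_sub, hf n hn, hg n hn, sub_zero]

lemma Kplus_sub {f g : LaurentSeries k} (hf : Kplus f) (hg : Kplus g) : Kplus (f - g) := by
  intro n hn; rw [HahnSeries.coeff_sub, hf n hn, hg n hn, sub_zero]

lemma Kminus_listSum : ∀ (l : List (LaurentSeries k)), (∀ f ∈ l, Kminus f) → Kminus l.sum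
  | [], _ => fun n _ => HahnSeries.coeff_zero
  | f :: l, h => by
      rw [List.sum_cons]
      intro n hn
      rw [HahnSeries.coeff_add, h f (List.mem_cons_self (a := f) (l := l)) n hn,
        Kminus_listSum l (fun g hg => h g (List.mem_cons_of_mem f hg)) n hn, add_zero]

lemma Kplus_listSum : ∀ (l : List (LaurentSeries k)), (∀ f ∈ l, Kplus f) → Kplus l.sum
  | [], _ => fun n _ => HahnSeries.coeff_zero
  | f :: l, h => by
      rw [List.sum_cons]
      intro n hn
      rw [HahnSeries.coeff_add, h f (List.mem_cons_self (a := f) (l := l)) n hn,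
        Kplus_listSum l (fun g hg => h g (List.mem_cons_of_mem f hg)) n hn, add_zero]

lemma Kpm_eq_zero {f : LaurentSeries k} (hm : Kminus f) (hp : Kplus f) : f = 0 := by
  apply HahnSeries.ext
  funext n
  rw [HahnSeries.coeff_zero]
  rcases lt_or_ge n 0 with h | h
  · exact hp n h
  · exact hm n h

end Laurent

/-- both factors of the Birkhoff decomposition of a symmetral mould
are symmetral. -/
theorem birkhoff_factors_symmetral
    {𝒩 k : Type*} [Nonempty 𝒩] [Field k] [CharZero k]
    (T : List 𝒩 → LaurentSeries k) (hT : Symmetral T)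
    (Um Up : List 𝒩 → LaurentSeries k)
    (hUm0 : Um [] = 1) (hUp0 : Up [] = 1)
    (hUm : ∀ n : List 𝒩, n ≠ [] → Kminus (Um n))
    (hUp : ∀ n : List 𝒩, Kplus (Up n))
    (hEq : mmul Um T = Up) :
    Symmetral Um ∧ Symmetral Up := by
  have hT0 : T [] = 1 := hT.1
  have hPhiT : ∀ c d : List 𝒩, Phi T c d = T c * T d := by
    intro c d
    rcases c with _ | ⟨x, c⟩
    · rw [phi_nil_left, hT0, one_mul]
    rcases d with _ | ⟨y, d⟩
    · rw [phi_nil_right, hT0, mul_one]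
    · rw [← finsum_sh]
      exact hT.2 _ _ (by simp) (by simp)
  have hempty : ∀ (V : List 𝒩 → LaurentSeries k), V [] = 1 →
      ∀ a b : List 𝒩, a = [] ∨ b = [] → Phi V a b = V a * V b := by
    intro V hV a b h
    rcases h with rfl | rfl
    · rw [phi_nil_left, hV, one_mul]
    · rw [phi_nil_right, hV, mul_one]
  have main : ∀ (L : ℕ) (a b : List 𝒩), a.length + b.length ≤ L →
      Phi Um a b = Um a * Um b ∧ Phi Up a b = Up a * Up b := by
    intro L
    induction L with
    | zero =>
        intro a b hab
        have ha : a = [] := by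
          cases a
          · rfl
          · simp at hab
        exact ⟨hempty Um hUm0 a b (Or.inl ha), hempty Up hUp0 a b (Or.inl ha)⟩
    | succ L IH =>
        intro a b hab
        rcases a with _ | ⟨x, a'⟩
        · exact ⟨hempty Um hUm0 _ _ (Or.inl rfl), hempty Up hUp0 _ _ (Or.inl rfl)⟩
        rcases b with _ | ⟨y, b'⟩
        · exact ⟨hempty Um hUm0 _ _ (Or.inr rfl), hempty Up hUp0 _ _ (Or.inr rfl)⟩
        set a : List 𝒩 := x :: a' with ha
        set b : List 𝒩 := y :: b' with hb
        have h1 : Phi Up a b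
            = ∑ i ∈ Finset.range (a.length + 1), ∑ j ∈ Finset.range (b.length + 1),
                Phi Um (a.take i) (b.take j) * Phi T (a.drop i) (b.drop j) := by
          rw [← hEq]; exact key Um T a b
        have h2 : Up a * Up b
            = ∑ i ∈ Finset.range (a.length + 1), ∑ j ∈ Finset.range (b.length + 1),
                (Um (a.take i) * Um (b.take j)) * (T (a.drop i) * T (b.drop j)) := by
          rw [← hEq]; exact psi_mul Um T a b
        have key3 : Phi Up a b - Up a * Up b = Phi Um a b - Um a * Um b := by
          rw [h1, h2, ← Finset.sum_sub_distrib]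
          have hterm : ∀ i ∈ Finset.range (a.length + 1),
              ((∑ j ∈ Finset.range (b.length + 1),
                  Phi Um (a.take i) (b.take j) * Phi T (a.drop i) (b.drop j))
                - ∑ j ∈ Finset.range (b.length + 1),
                  (Um (a.take i) * Um (b.take j)) * (T (a.drop i) * T (b.drop j)))
              = ∑ j ∈ Finset.range (b.length + 1),
                  (Phi Um (a.take i) (b.take j) - Um (a.take i) * Um (b.take j))
                    * (T (a.drop i) * T (b.drop j)) := by
            intro i _
            rw [← Finset.sum_sub_distrib]
            refine Finset.sum_congr rfl fun j _ => ?_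
            rw [hPhiT, sub_mul]
          rw [Finset.sum_congr rfl hterm]
          -- now peel the top terms; all lower terms vanish by IH
          have hvanish : ∀ i j : ℕ, i ≤ a.length → j ≤ b.length → i + j ≤ L →
              Phi Um (a.take i) (b.take j) - Um (a.take i) * Um (b.take j) = 0 := by
            intro i j hi hj hij
            have := (IH (a.take i) (b.take j) (by
              simp only [List.length_take]
              omega)).1
            rw [this, sub_self]
          have hlen : a.length + b.length ≤ L + 1 := hab
          rw [Finset.sum_range_succ]
          have hzero : ∀ i ∈ Finset.range a.length,
              (∑ j ∈ Finset.range (b.length + 1),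
                (Phi Um (a.take i) (b.take j) - Um (a.take i) * Um (b.take j))
                  * (T (a.drop i) * T (b.drop j))) = 0 := by
            intro i hi
            rw [Finset.mem_range] at hi
            refine Finset.sum_eq_zero fun j hj => ?_
            rw [Finset.mem_range] at hj
            rw [hvanish i j (le_of_lt hi) (by omega) (by omega), zero_mul]
          rw [Finset.sum_eq_zero hzero, zero_add]
          rw [Finset.sum_range_succ]
          have hzero2 : ∀ j ∈ Finset.range b.length,
              (Phi Um (a.take a.length) (b.take j) - Um (a.take a.length) * Um (b.take j))
                * (T (a.drop a.length) * T (b.drop j)) = 0 := by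
            intro j hj
            rw [Finset.mem_range] at hj
            rw [hvanish a.length j le_rfl (by omega) (by omega), zero_mul]
          rw [Finset.sum_eq_zero hzero2, zero_add, List.take_length, List.take_length,
            List.drop_length, List.drop_length, hT0, mul_one, mul_one]
        have hKm : Kminus (Phi Um a b - Um a * Um b) := by
          apply Kminus_sub
          · show Kminus ((shl a b).map Um).sum
            apply Kminus_listSum
            intro f hf
            rw [List.mem_map] at hf
            obtain ⟨n, hn, rfl⟩ := hf
            have hlen := shl_length a b n hn
            apply hUm
            intro hnil
            rw [hnil, ha, hb] at hlen
            simp only [List.length_nil, List.length_cons] at hlen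
            omega
          · exact Kminus_mul (hUm a (by simp [ha])) (hUm b (by simp [hb]))
        have hKp : Kplus (Phi Up a b - Up a * Up b) := by
          apply Kplus_sub
          · show Kplus ((shl a b).map Up).sum
            apply Kplus_listSum
            intro f hf
            rw [List.mem_map] at hf
            obtain ⟨n, hn, rfl⟩ := hf
            exact hUp n
          · exact Kplus_mul (hUp a) (hUp b)
        have hE0 : Phi Um a b - Um a * Um b = 0 :=
          Kpm_eq_zero hKm (key3 ▸ hKp)
        refine ⟨sub_eq_zero.mp hE0, sub_eq_zero.mp ?_⟩
        rw [key3, hE0]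
  refine ⟨⟨hUm0, ?_⟩, ⟨hUp0, ?_⟩⟩ <;> intro a b ha hb
  · rw [finsum_sh]
    exact (main (a.length + b.length) a b le_rfl).1
  · rw [finsum_sh]
    exact (main (a.length + b.length) a b le_rfl).2
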